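/- Under hypothesis (a.5), there exist constants C > 0 and δ > 0 such that γ''(t) ≥ C·γ''(t)^δ / t² for all small t > 0; one may take δ = (α−1)/(α+1) where α = log(2/(1+ε))/log(1+ε). -/

import Mathlib

open Real Set

set_option maxHeartbeats 1600000 in
/-- under (a.5), γ''(t) ≥ C·γ''(t)^δ/t² for small t, with
    δ = (α−1)/(α+1), α = log(2/(1+ε))/log(1+ε). -/
theorem stmt_3
    (γ'' : ℝ → ℝ)
    (hpos : ∀ t ∈ Ioc (0:ℝ) 1, 0 < γ'' t)
    (hanti : StrictAntiOn γ'' (Ioc (0:ℝ) 1))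
    (ε t₀ : ℝ) (hε : 0 < ε) (hε2 : (1 + ε)^2 < 2)
    (ht₀ : t₀ ∈ Ioc (0:ℝ) 1)
    (ha5 : ∀ t : ℝ, 0 < t → t < t₀ → γ'' t ≥ 2 * γ'' ((1 + ε) * t)) :
    ∃ C δ : ℝ, 0 < C ∧ 0 < δ ∧
      δ = (Real.log (2 / (1 + ε)) / Real.log (1 + ε) - 1) /
          (Real.log (2 / (1 + ε)) / Real.log (1 + ε) + 1) ∧
      ∃ T : ℝ, 0 < T ∧ ∀ t : ℝ, 0 < t → t < T →
        γ'' t ≥ C * γ'' t ^ δ / t ^ 2 := by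
  have h1ε : (1:ℝ) < 1 + ε := by linarith
  have h1ε0 : (0:ℝ) < 1 + ε := by linarith
  obtain ⟨ht₀0, ht₀1⟩ := ht₀
  obtain ⟨L, hLdef⟩ : ∃ L : ℝ, L = Real.log (1 + ε) := ⟨_, rfl⟩
  have hL : 0 < L := hLdef ▸ Real.log_pos h1ε
  obtain ⟨α, hαdef⟩ : ∃ α : ℝ, α = Real.log (2 / (1 + ε)) / L := ⟨_, rfl⟩
  have hlt : 1 + ε < 2 / (1 + ε) := by
    rw [lt_div_iff₀ h1ε0]; nlinarith
  have hα1 : 1 < α := by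
    rw [hαdef, lt_div_iff₀ hL, hLdef]
    simpa using Real.log_lt_log h1ε0 hlt
  have hα0 : 0 < α := by linarith
  -- α = log 2 / L - 1
  have hαeq : 1 + α = Real.log 2 / L := by
    rw [hαdef, Real.log_div (by norm_num) (ne_of_gt h1ε0), ← hLdef]
    field_simp; ring
  obtain ⟨δ, hδdef⟩ : ∃ δ : ℝ, δ = (α - 1) / (α + 1) := ⟨_, rfl⟩
  have hδ0 : 0 < δ := by
    rw [hδdef]; exact div_pos (by linarith) (by linarith)
  have hδ1 : δ < 1 := by
    rw [hδdef, div_lt_one (by linarith)]; linarith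
  have h1δ : 1 - δ = 2 / (α + 1) := by
    rw [hδdef]; field_simp; norm_num
  have hexp2 : (1 + α) * (1 - δ) = 2 := by
    have hne : α + 1 ≠ 0 := by linarith
    rw [h1δ]; field_simp; ring
  have ht₀pos := hpos t₀ ⟨ht₀0, ht₀1⟩
  -- iteration lemma
  have key : ∀ n : ℕ, ∀ t : ℝ, 0 < t → (1 + ε) ^ n * t ≤ t₀ →
      2 ^ n * γ'' ((1 + ε) ^ n * t) ≤ γ'' t := by
    intro n
    induction n with
    | zero => intro t ht _; simp
    | succ n ih =>
      intro t ht hle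
      have hpow1 : (1:ℝ) < (1 + ε) ^ (n + 1) := one_lt_pow₀ h1ε (Nat.succ_ne_zero n)
      have htlt : t < t₀ := by nlinarith
      have h2 := ha5 t ht htlt
      have h3 := ih ((1 + ε) * t) (by positivity) (by rw [← mul_assoc, ← pow_succ]; exact hle)
      rw [← mul_assoc, ← pow_succ] at h3
      have hγpos : 0 < γ'' ((1 + ε) ^ (n + 1) * t) := by
        refine hpos _ ⟨by positivity, le_trans hle ht₀1⟩
      calc 2 ^ (n + 1) * γ'' ((1 + ε) ^ (n + 1) * t)
          = 2 * (2 ^ n * γ'' ((1 + ε) ^ (n + 1) * t)) := by ring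
        _ ≤ 2 * γ'' ((1 + ε) * t) := by linarith
        _ ≤ γ'' t := h2
  -- power lower bound
  have bound : ∀ t : ℝ, 0 < t → t < t₀ →
      γ'' t₀ / 2 * (t₀ / t) ^ (1 + α) ≤ γ'' t := by
    intro t ht htlt
    have hrat : (1:ℝ) < t₀ / t := (one_lt_div ht).mpr htlt
    have hlograt : 0 < Real.log (t₀ / t) := Real.log_pos hrat
    set n : ℕ := ⌊Real.log (t₀ / t) / L⌋₊ with hn
    have h1 : (n : ℝ) ≤ Real.log (t₀ / t) / L := Nat.floor_le (by positivity)
    have h2 : Real.log (t₀ / t) / L < n + 1 := Nat.lt_floor_add_one _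
    have hpow_le : (1 + ε) ^ n * t ≤ t₀ := by
      have : ((1 + ε) : ℝ) ^ n ≤ t₀ / t := by
        have heq : ((1 + ε) : ℝ) ^ n = Real.exp (n * L) := by
          rw [hLdef, ← Real.exp_log h1ε0, ← Real.exp_nat_mul, Real.exp_log h1ε0]
        rw [heq, ← Real.exp_log (lt_trans one_pos hrat)]
        exact Real.exp_le_exp.mpr (by rw [← le_div_iff₀ hL]; exact h1)
      calc (1 + ε) ^ n * t ≤ (t₀ / t) * t := by
            exact mul_le_mul_of_nonneg_right this ht.le
        _ = t₀ := by field_simp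
    have hmem : (1 + ε) ^ n * t ∈ Ioc (0:ℝ) 1 := ⟨by positivity, le_trans hpow_le ht₀1⟩
    have hanti' : γ'' t₀ ≤ γ'' ((1 + ε) ^ n * t) := by
      rcases eq_or_lt_of_le hpow_le with heq | hlt'
      · rw [heq]
      · exact (hanti hmem ⟨ht₀0, ht₀1⟩ hlt').le
    have h2pow : (t₀ / t) ^ (1 + α) ≤ 2 ^ (n + 1) := by
      have hrw : (t₀ / t) ^ (1 + α) = Real.exp ((1 + α) * Real.log (t₀ / t)) := by
        rw [Real.rpow_def_of_pos (lt_trans one_pos hrat), mul_comm]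
      have hrw2 : (2:ℝ) ^ (n + 1) = Real.exp ((n + 1) * Real.log 2) := by
        rw [← Real.exp_log (two_pos), ← Real.exp_nat_mul, Real.exp_log two_pos]
        norm_num
      rw [hrw, hrw2]
      apply Real.exp_le_exp.mpr
      have hlog2 : 0 < Real.log 2 := Real.log_pos one_lt_two
      have : (1 + α) * Real.log (t₀ / t) = Real.log 2 * (Real.log (t₀ / t) / L) := by
        rw [hαeq]; field_simp
      rw [this]
      have := h2.le
      nlinarith [this, hlog2]
    have hkey := key n t ht hpow_le
    have h4 : (t₀ / t) ^ (1 + α) * γ'' t₀ ≤ 2 ^ (n + 1) * γ'' t₀ :=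
      mul_le_mul_of_nonneg_right h2pow ht₀pos.le
    have h5 : (2:ℝ) ^ (n + 1) * γ'' t₀ = 2 * (2 ^ n * γ'' t₀) := by ring
    have h6 : (2:ℝ) ^ n * γ'' t₀ ≤ 2 ^ n * γ'' ((1 + ε) ^ n * t) :=
      mul_le_mul_of_nonneg_left hanti' (by positivity)
    nlinarith [hkey, h4, h6]
  -- assemble
  obtain ⟨K, hK⟩ : ∃ K : ℝ, K = γ'' t₀ / 2 * t₀ ^ (1 + α) := ⟨_, rfl⟩
  have hKpos : 0 < K := by
    rw [hK]; exact mul_pos (by linarith) (Real.rpow_pos_of_pos ht₀0 _)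
  refine ⟨K ^ (1 - δ), δ, Real.rpow_pos_of_pos hKpos _, hδ0,
    by rw [hδdef, hαdef, hLdef], t₀, ht₀0, ?_⟩
  intro t ht htlt
  have hγt : 0 < γ'' t := hpos t ⟨ht, by linarith⟩
  have hbd := bound t ht htlt
  -- rewrite (t₀/t)^(1+α) = t₀^(1+α) * t^(-(1+α))
  have hrw : γ'' t₀ / 2 * (t₀ / t) ^ (1 + α) = K * (t ^ (1 + α))⁻¹ := by
    rw [hK, Real.div_rpow ht₀0.le ht.le]
    field_simp
  rw [hrw] at hbd
  have htpow : 0 < t ^ (1 + α) := Real.rpow_pos_of_pos ht _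
  -- γ'' t ^ (1-δ) ≥ K^(1-δ) / t^2
  have hmono : (K * (t ^ (1 + α))⁻¹) ^ (1 - δ) ≤ γ'' t ^ (1 - δ) :=
    Real.rpow_le_rpow (by positivity) hbd (by linarith)
  have hrw2 : (K * (t ^ (1 + α))⁻¹) ^ (1 - δ) = K ^ (1 - δ) / t ^ 2 := by
    have e1 : (t ^ (1 + α))⁻¹ = t ^ (-(1 + α)) := (Real.rpow_neg ht.le _).symm
    rw [e1, Real.mul_rpow hKpos.le (Real.rpow_nonneg ht.le _), ← Real.rpow_mul ht.le]
    have e2 : -(1 + α) * (1 - δ) = -2 := by linear_combination -hexp2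
    rw [e2, show ((-2:ℝ)) = -((2:ℕ):ℝ) by norm_num, Real.rpow_neg ht.le, Real.rpow_natCast,
      div_eq_mul_inv]
  rw [hrw2] at hmono
  have hsplit : γ'' t = γ'' t ^ δ * γ'' t ^ (1 - δ) := by
    rw [← Real.rpow_add hγt, show δ + (1 - δ) = 1 by ring, Real.rpow_one]
  rw [ge_iff_le, div_le_iff₀ (by positivity)]
  calc K ^ (1 - δ) * γ'' t ^ δ = γ'' t ^ δ * (K ^ (1 - δ) / t ^ 2) * t ^ 2 := by
        field_simp
    _ ≤ γ'' t ^ δ * γ'' t ^ (1 - δ) * t ^ 2 := by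
        have : γ'' t ^ δ * (K ^ (1 - δ) / t ^ 2) ≤ γ'' t ^ δ * γ'' t ^ (1 - δ) :=
          mul_le_mul_of_nonneg_left hmono (Real.rpow_nonneg hγt.le _)
        nlinarith [sq_nonneg t, pow_pos ht 2, this]
    _ = γ'' t * t ^ 2 := by rw [← hsplit]
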